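/- Let p be a source and set λ = ⌈−lg p(1)⌉. Define the first-order Shannon code l¹ by l¹(1) = λ and l¹(i) = ⌈−lg( p(i)·(1 − 2^{−λ})/(1 − p(1)) )⌉ for 2 ≤ i ≤ n. Then l¹ is a valid codeword-length vector (positive integer entries satisfying the Kraft inequality ∑_i 2^{−l¹(i)} ≤ 1), and max_{2≤i≤n} (l¹(i) + lg p(i)) < 1 + lg((1 − p(1))/(1 − 2^{−λ})). -/

import Mathlib

/-- A source: a positive, monotonically nonincreasing probability mass function on `Fin n`. -/
def IsSource (n : ℕ) (p : Fin n → ℝ) : Prop :=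
  (∀ i, 0 < p i) ∧ (∑ i, p i = 1) ∧ (∀ i j : Fin n, i ≤ j → p j ≤ p i)

/-- A codeword-length vector: positive integer lengths satisfying the Kraft inequality. -/
def IsCLV (n : ℕ) (l : Fin n → ℤ) : Prop :=
  (∀ i, 1 ≤ l i) ∧ (∑ i, (2:ℝ) ^ (-(l i)) ≤ 1)

/-- Maximum pointwise redundancy `R*(l,p) = max_i (l(i) + lg p(i))`. -/
noncomputable def Rstar (n : ℕ) (l : Fin n → ℤ) (p : Fin n → ℝ) : ℝ :=
  ⨆ i : Fin n, ((l i : ℝ) + Real.logb 2 (p i))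

/-- Minimum maximum pointwise redundancy over all codeword-length vectors. -/
noncomputable def RstarOpt (n : ℕ) (p : Fin n → ℝ) : ℝ :=
  sInf {r : ℝ | ∃ l : Fin n → ℤ, IsCLV n l ∧ Rstar n l p = r}

lemma pow_neg_ceil_le {x : ℝ} (hx : 0 < x) :
    (2:ℝ) ^ (-(⌈-Real.logb 2 x⌉ : ℤ)) ≤ x := by
  have h1 : (-(⌈-Real.logb 2 x⌉ : ℤ) : ℝ) ≤ Real.logb 2 x := by
    have := Int.le_ceil (-Real.logb 2 x)
    push_cast
    linarith
  calc (2:ℝ) ^ (-(⌈-Real.logb 2 x⌉ : ℤ))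
      = (2:ℝ) ^ (((-⌈-Real.logb 2 x⌉ : ℤ) : ℝ)) := (Real.rpow_intCast 2 _).symm
    _ = (2:ℝ) ^ ((-(⌈-Real.logb 2 x⌉ : ℤ) : ℝ)) := by push_cast; ring_nf
    _ ≤ (2:ℝ) ^ (Real.logb 2 x) := Real.rpow_le_rpow_of_exponent_le one_le_two h1
    _ = x := Real.rpow_logb two_pos (by norm_num) hx

theorem stmt10 (n : ℕ) (hn : 2 ≤ n) (p : Fin n → ℝ) (hp : IsSource n p)
    (lam : ℤ) (hlam : lam = ⌈-Real.logb 2 (p ⟨0, by omega⟩)⌉)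
    (l1 : Fin n → ℤ)
    (h0 : l1 ⟨0, by omega⟩ = lam)
    (hi : ∀ i : Fin n, 0 < i.val →
      l1 i = ⌈-Real.logb 2 (p i * ((1 - (2:ℝ) ^ (-lam)) / (1 - p ⟨0, by omega⟩)))⌉) :
    IsCLV n l1 ∧
      ∀ i : Fin n, 0 < i.val →
        (l1 i : ℝ) + Real.logb 2 (p i) <
          1 + Real.logb 2 ((1 - p ⟨0, by omega⟩) / (1 - (2:ℝ) ^ (-lam))) := by
  obtain ⟨hpos, hsum, hmono⟩ := hp
  have hn0 : (0:ℕ) < n := by omega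
  have i0eq : ∀ (h : 0 < n), (⟨0, h⟩ : Fin n) = ⟨0, hn0⟩ := fun _ => rfl
  simp only [i0eq] at hlam hi h0 ⊢
  set i0 : Fin n := ⟨0, hn0⟩ with hi0def
  set i1 : Fin n := ⟨1, by omega⟩ with hi1def
  have hp0 : 0 < p i0 := hpos i0
  have hp0lt : p i0 < 1 := by
    rw [← hsum]
    exact Finset.single_lt_sum (by simp [hi0def, hi1def, Fin.ext_iff])
      (Finset.mem_univ i0) (Finset.mem_univ i1) (hpos i1)
      (fun k _ _ => (hpos k).le)
  have hpow : (2:ℝ) ^ (-lam) ≤ p i0 := by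
    rw [hlam]; exact pow_neg_ceil_le hp0
  have hpowpos : (0:ℝ) < (2:ℝ) ^ (-lam) := zpow_pos two_pos _
  have hpowlt1 : (2:ℝ) ^ (-lam) < 1 := lt_of_le_of_lt hpow hp0lt
  have h1p0 : (0:ℝ) < 1 - p i0 := by linarith
  set c : ℝ := (1 - (2:ℝ) ^ (-lam)) / (1 - p i0) with hcdef
  have hcpos : 0 < c := div_pos (by linarith) h1p0
  have hple : ∀ i : Fin n, i ≠ i0 → p i ≤ 1 - p i0 := by
    intro i hne
    have h1 : p i ≤ ∑ j ∈ Finset.univ.erase i0, p j :=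
      Finset.single_le_sum (fun k _ => (hpos k).le)
        (Finset.mem_erase.mpr ⟨hne, Finset.mem_univ i⟩)
    rwa [Finset.sum_erase_eq_sub (Finset.mem_univ i0), hsum] at h1
  have hne0 : ∀ i : Fin n, 0 < i.val → i ≠ i0 := by
    intro i h h'; rw [h'] at h; exact absurd h (Nat.lt_irrefl 0)
  have hval : ∀ i : Fin n, i ≠ i0 → 0 < i.val := by
    intro i h
    rcases Nat.eq_zero_or_pos i.val with h' | h'
    · exact absurd (Fin.ext h') h
    · exact h'
  have hkey : ∀ i : Fin n, 0 < i.val → (2:ℝ) ^ (-(l1 i)) ≤ p i * c := by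
    intro i h
    rw [hi i h]
    exact pow_neg_ceil_le (mul_pos (hpos i) hcpos)
  have hqlt1 : ∀ i : Fin n, 0 < i.val → p i * c < 1 := by
    intro i h
    have h1 : p i * c ≤ (1 - p i0) * c :=
      mul_le_mul_of_nonneg_right (hple i (hne0 i h)) hcpos.le
    have h2 : (1 - p i0) * c = 1 - (2:ℝ) ^ (-lam) := by
      rw [hcdef]; field_simp
    linarith
  constructor
  · constructor
    · intro i
      rcases Nat.eq_zero_or_pos i.val with h' | h'
      · have : i = i0 := Fin.ext h'
        rw [this, h0, hlam]
        rw [Int.one_le_ceil_iff]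
        have := Real.logb_neg (b := 2) one_lt_two hp0 hp0lt
        linarith
      · rw [hi i h', Int.one_le_ceil_iff]
        have := Real.logb_neg (b := 2) one_lt_two (mul_pos (hpos i) hcpos) (hqlt1 i h')
        linarith
    · rw [← Finset.add_sum_erase Finset.univ _ (Finset.mem_univ i0), h0]
      have hb : ∑ i ∈ Finset.univ.erase i0, (2:ℝ) ^ (-(l1 i)) ≤
          ∑ i ∈ Finset.univ.erase i0, p i * c := by
        refine Finset.sum_le_sum fun i hm => ?_
        exact hkey i (hval i (Finset.mem_erase.mp hm).1)
      have hc : ∑ i ∈ Finset.univ.erase i0, p i * c = (1 - p i0) * c := by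
        rw [← Finset.sum_mul, Finset.sum_erase_eq_sub (Finset.mem_univ i0), hsum]
      have h2 : (1 - p i0) * c = 1 - (2:ℝ) ^ (-lam) := by
        rw [hcdef]; field_simp
      rw [hc, h2] at hb
      linarith
  · intro i h
    rw [hi i h]
    have hceil : (⌈-Real.logb 2 (p i * c)⌉ : ℝ) < -Real.logb 2 (p i * c) + 1 :=
      Int.ceil_lt_add_one _
    have hmul : Real.logb 2 (p i * c) = Real.logb 2 (p i) + Real.logb 2 c :=
      Real.logb_mul (hpos i).ne' hcpos.ne'
    have hdiv : Real.logb 2 ((1 - p i0) / (1 - (2:ℝ) ^ (-lam))) = - Real.logb 2 c := by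
      rw [hcdef, Real.logb_div h1p0.ne' (by linarith : (1:ℝ) - (2:ℝ) ^ (-lam) ≠ 0),
        Real.logb_div (by linarith : (1:ℝ) - (2:ℝ) ^ (-lam) ≠ 0) h1p0.ne']
      ring
    rw [hdiv]
    linarith
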